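/- Let p be a prime and β a real number with 0 < β < 1, and for n ≥ 1 set b_n = β^{p^{v_p(n)}} (that is, b_n = β^{|n|_p^{−1}}). Then: (1) the series H(z) = ∑_{n≥1} b_n z^n converges for every complex z with |z| < 1, and its radius of convergence is exactly 1; (2) the holomorphic function H on the open unit disk has the unit circle as natural boundary: for every complex w with |w| = 1 and every ε > 0 there is no holomorphic function g on the open ball B(w, ε) with g(z) = H(z) for all z ∈ B(w, ε) ∩ B(0, 1). -/

import Mathlib

open Filter Topology Real

namespace HbetaAux


/-- coefficients of the telescoped series -/
noncomputable def c (p : ℕ) (β : ℝ) : ℕ → ℝ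
  | 0 => β
  | (j+1) => β ^ p ^ (j+1) - β ^ p ^ j

lemma c_sum (p : ℕ) (β : ℝ) (v : ℕ) :
    ∑ j ∈ Finset.range (v+1), c p β j = β ^ p ^ v := by
  induction v with
  | zero => simp [c]
  | succ v ih => rw [Finset.sum_range_succ, ih]; simp [c]

lemma c_abs_le (p : ℕ) (β : ℝ) (hβ0 : 0 < β) (hβ1 : β < 1) (j : ℕ) : |c p β j| ≤ 2 := by
  have h : ∀ m : ℕ, 0 < β ^ m ∧ β ^ m ≤ 1 := by
    intro m
    exact ⟨pow_pos hβ0 m, pow_le_one₀ hβ0.le hβ1.le⟩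
  cases j with
  | zero =>
    simp only [c]
    have := h 1
    rw [abs_of_pos hβ0]
    nlinarith [(h 1).1]
  | succ j =>
    simp only [c]
    have h1 := h (p ^ (j+1))
    have h2 := h (p ^ j)
    rw [abs_le]; constructor <;> nlinarith

lemma c_nonpos (p : ℕ) (β : ℝ) (hβ0 : 0 < β) (hβ1 : β < 1) (hp : 2 ≤ p) (j : ℕ) (hj : 1 ≤ j) :
    c p β j ≤ 0 := by
  obtain ⟨i, rfl⟩ := Nat.exists_eq_add_of_le hj
  simp only [add_comm 1 i, c]
  have : p ^ i ≤ p ^ (i + 1) := Nat.pow_le_pow_right (by omega) (by omega)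
  have := pow_le_pow_of_le_one hβ0.le hβ1.le this
  linarith

lemma c_neg (p : ℕ) (β : ℝ) (hβ0 : 0 < β) (hβ1 : β < 1) (hp : 2 ≤ p) (j : ℕ) (hj : 1 ≤ j) :
    c p β j < 0 := by
  obtain ⟨i, rfl⟩ := Nat.exists_eq_add_of_le hj
  simp only [add_comm 1 i, c]
  have hlt : p ^ i < p ^ (i + 1) := Nat.pow_lt_pow_right (by omega) (by omega)
  have := pow_lt_pow_right_of_lt_one₀ hβ0 hβ1 hlt
  linarith

/-- shifted geometric series -/
lemma hasSum_geom_shift {𝕜 : Type*} [NormedField 𝕜] [CompleteSpace 𝕜] (w : 𝕜) (hw : ‖w‖ < 1) :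
    HasSum (fun m : ℕ => if m = 0 then 0 else w ^ m) (w / (1 - w)) := by
  have h := (hasSum_geometric_of_norm_lt_one hw).mul_left w
  have h' : HasSum (fun n : ℕ => (fun m : ℕ => if m = 0 then (0:𝕜) else w ^ m) (n + 1))
      (w * (1 - w)⁻¹) := by
    refine h.congr_fun fun n => ?_
    simp [pow_succ, mul_comm]
  have h'' := (hasSum_nat_add_iff (f := fun m : ℕ => if m = 0 then (0:𝕜) else w ^ m) 1).mp h'
  simpa [div_eq_mul_inv] using h''

/-- the inner sum over multiples of p^j -/
lemma hasSum_inner {𝕜 : Type*} [NormedField 𝕜] [CompleteSpace 𝕜] (q : ℕ) (hq : q ≠ 0)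
    (z : 𝕜) (hz : ‖z‖ < 1) :
    HasSum (fun n : ℕ => if q ∣ n ∧ n ≠ 0 then z ^ n else 0)
      (z ^ q / (1 - z ^ q)) := by
  have hwq : ‖z ^ q‖ < 1 := by
    rw [norm_pow]
    exact pow_lt_one₀ (norm_nonneg z) hz hq
  have hgeom := hasSum_geom_shift (z ^ q) hwq
  have hinj : Function.Injective (fun m : ℕ => q * m) := fun a b h => by
    simpa [Nat.mul_left_cancel_iff (Nat.pos_of_ne_zero hq)] using h
  have h0 : ∀ n ∉ Set.range (fun m : ℕ => q * m),
      (if q ∣ n ∧ n ≠ 0 then z ^ n else (0:𝕜)) = 0 := by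
    intro n hn
    rw [if_neg]
    rintro ⟨⟨m, rfl⟩, -⟩
    exact hn ⟨m, rfl⟩
  rw [← hinj.hasSum_iff h0]
  refine hgeom.congr_fun fun m => ?_
  by_cases hm : m = 0 <;> simp [hm, hq, pow_mul, Nat.mul_ne_zero, Function.comp]


noncomputable def T (p : ℕ) (β : ℝ) (z : ℂ) (j : ℕ) : ℂ :=
  (c p β j : ℂ) * (z ^ p ^ j / (1 - z ^ p ^ j))

noncomputable def F (p : ℕ) (β : ℝ) (z : ℂ) : ℕ × ℕ → ℂ :=
  fun jn => if p ^ jn.1 ∣ jn.2 ∧ jn.2 ≠ 0 then (c p β jn.1 : ℂ) * z ^ jn.2 else 0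

lemma claimA (p : ℕ) (hp : p.Prime) (β : ℝ) (z : ℂ) (n : ℕ) :
    HasSum (fun j => F p β z (j, n))
      (((if n = 0 then (0:ℝ) else β ^ p ^ padicValNat p n : ℝ) : ℂ) * z ^ n) := by
  haveI : Fact p.Prime := ⟨hp⟩
  by_cases hn : n = 0
  · subst hn
    have : (fun j => F p β z (j, 0)) = fun _ => 0 := by
      funext j; simp [F]
    rw [this]
    simpa using hasSum_zero
  · set v := padicValNat p n with hv
    have hcond : ∀ j : ℕ, (p ^ j ∣ n ∧ n ≠ 0) ↔ j ≤ v := by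
      intro j
      rw [padicValNat_dvd_iff_le hn]
      exact ⟨fun h => h.1, fun h => ⟨h, hn⟩⟩
    have hsupp : ∀ j ∉ Finset.range (v+1), F p β z (j, n) = 0 := by
      intro j hj
      rw [Finset.mem_range, not_lt] at hj
      have hc : ¬ (p ^ j ∣ n ∧ n ≠ 0) := by rw [hcond]; omega
      simp [F, hc]
    have h : HasSum (fun j => F p β z (j, n)) (∑ j ∈ Finset.range (v+1), F p β z (j, n)) :=
      hasSum_sum_of_ne_finset_zero hsupp
    have heq : ∑ j ∈ Finset.range (v+1), F p β z (j, n)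
        = ((β ^ p ^ v : ℝ) : ℂ) * z ^ n := by
      have hterm : ∀ j ∈ Finset.range (v+1), F p β z (j,n) = (c p β j : ℂ) * z ^ n := by
        intro j hj
        rw [Finset.mem_range] at hj
        have hc : p ^ j ∣ n ∧ n ≠ 0 := (hcond j).mpr (by omega)
        simp [F, hc]
      rw [Finset.sum_congr rfl hterm, ← Finset.sum_mul, ← c_sum p β v]
      push_cast
      ring
    rw [heq] at h
    rw [if_neg hn]
    exact h

lemma F_norm_summable (p : ℕ) (hp : p.Prime) (β : ℝ) (hβ0 : 0 < β) (hβ1 : β < 1)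
    (z : ℂ) (hz : ‖z‖ < 1) :
    Summable (fun jn : ℕ × ℕ => ‖F p β z jn‖) := by
  have hz0 : (0:ℝ) ≤ ‖z‖ := norm_nonneg z
  have hzn : ‖(‖z‖ : ℝ)‖ < 1 := by rwa [Real.norm_of_nonneg hz0]
  have hq : ∀ j : ℕ, p ^ j ≠ 0 := fun j => pow_ne_zero j hp.pos.ne'
  have hnorm : ∀ jn : ℕ × ℕ, ‖F p β z jn‖
      = |c p β jn.1| * (if p ^ jn.1 ∣ jn.2 ∧ jn.2 ≠ 0 then ‖z‖ ^ jn.2 else 0) := by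
    rintro ⟨j, n⟩
    simp only [F]
    split_ifs with h
    · rw [norm_mul, Complex.norm_real, Real.norm_eq_abs, norm_pow]
    · simp
  have hrow : ∀ j : ℕ, HasSum (fun n : ℕ =>
      |c p β j| * (if p ^ j ∣ n ∧ n ≠ 0 then ‖z‖ ^ n else 0))
      (|c p β j| * (‖z‖ ^ p ^ j / (1 - ‖z‖ ^ p ^ j))) := fun j =>
    (hasSum_inner (p ^ j) (hq j) ‖z‖ hzn).mul_left _
  rw [funext hnorm]
  apply (summable_prod_of_nonneg ?_).mpr
  refine ⟨fun j => (hrow j).summable, ?_⟩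
  · have hbound : ∀ j : ℕ, (∑' n : ℕ, |c p β j| *
        (if p ^ j ∣ n ∧ n ≠ 0 then ‖z‖ ^ n else 0)) ≤ (2 / (1 - ‖z‖)) * ‖z‖ ^ j := by
      intro j
      rw [(hrow j).tsum_eq]
      have h1 : ‖z‖ ^ p ^ j ≤ ‖z‖ ^ j :=
        pow_le_pow_of_le_one hz0 hz.le (Nat.lt_pow_self (n := j) hp.one_lt).le
      have h2 : ‖z‖ ^ p ^ j ≤ ‖z‖ := by
        simpa using pow_le_pow_of_le_one hz0 hz.le (Nat.one_le_iff_ne_zero.mpr (hq j))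
      have h3 : 0 < 1 - ‖z‖ := by linarith
      have h4 : ‖z‖ ^ p ^ j / (1 - ‖z‖ ^ p ^ j) ≤ ‖z‖ ^ j / (1 - ‖z‖) := by
        apply div_le_div₀ (by positivity) h1 h3
        linarith
      calc |c p β j| * (‖z‖ ^ p ^ j / (1 - ‖z‖ ^ p ^ j))
          ≤ 2 * (‖z‖ ^ j / (1 - ‖z‖)) := by
            have h5 : (0:ℝ) < 1 - ‖z‖ ^ p ^ j := by linarith
            apply mul_le_mul (c_abs_le p β hβ0 hβ1 j) h4 (by positivity) (by norm_num)
        _ = (2 / (1 - ‖z‖)) * ‖z‖ ^ j := by ring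
    apply Summable.of_nonneg_of_le ?_ hbound
      (((summable_geometric_of_lt_one hz0 hz)).mul_left _)
    intro j
    apply tsum_nonneg
    intro n
    positivity
  · rintro ⟨j, n⟩
    dsimp only
    positivity

lemma summable_T (p : ℕ) (hp : p.Prime) (β : ℝ) (hβ0 : 0 < β) (hβ1 : β < 1)
    (z : ℂ) (hz : ‖z‖ < 1) : Summable (T p β z) := by
  have hF : Summable (F p β z) := (F_norm_summable p hp β hβ0 hβ1 z hz).of_norm
  refine hF.prod.congr fun j => ?_
  have h := (hasSum_inner (p ^ j) (pow_ne_zero j hp.pos.ne') z hz).mul_left ((c p β j : ℝ) : ℂ)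
  simp only [T]
  rw [← h.tsum_eq]
  apply tsum_congr
  intro n
  simp only [F, mul_ite, mul_zero]

lemma key (p : ℕ) (hp : p.Prime) (β : ℝ) (hβ0 : 0 < β) (hβ1 : β < 1)
    (z : ℂ) (hz : ‖z‖ < 1) :
    (∑' n : ℕ, ((if n = 0 then (0:ℝ) else β ^ p ^ padicValNat p n : ℝ) : ℂ) * z ^ n)
      = ∑' j : ℕ, T p β z j := by
  have hF : Summable (F p β z) := (F_norm_summable p hp β hβ0 hβ1 z hz).of_norm
  have hFu : Summable (Function.uncurry (fun j n => F p β z (j, n))) := hF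
  calc (∑' n : ℕ, ((if n = 0 then (0:ℝ) else β ^ p ^ padicValNat p n : ℝ) : ℂ) * z ^ n)
      = ∑' (n : ℕ) (j : ℕ), F p β z (j, n) := by
        refine tsum_congr fun n => ?_
        exact ((claimA p hp β z n).tsum_eq).symm
    _ = ∑' (j : ℕ) (n : ℕ), F p β z (j, n) := hFu.tsum_comm
    _ = ∑' j : ℕ, T p β z j := by
        refine tsum_congr fun j => ?_
        have h := (hasSum_inner (p ^ j) (pow_ne_zero j hp.pos.ne') z hz).mul_left
          ((c p β j : ℝ) : ℂ)
        simp only [T]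
        rw [← h.tsum_eq]
        refine tsum_congr fun n => ?_
        simp only [F, mul_ite, mul_zero]


lemma re_lt_one (u : ℂ) (hu : ‖u‖ = 1) (hu1 : u ≠ 1) : u.re < 1 := by
  have h1 : u.re * u.re + u.im * u.im = 1 := by
    have := Complex.sq_norm u
    rw [Complex.normSq_apply] at this
    rw [hu] at this
    linarith [this]
  rcases lt_or_ge u.re 1 with h | h
  · exact h
  · exfalso
    apply hu1
    have him : u.im = 0 := by nlinarith
    have hre : u.re = 1 := by nlinarith
    exact Complex.ext hre (by simp [him])

lemma denom_lb (u : ℂ) (hu : ‖u‖ = 1) (t : ℝ) (ht0 : 0 ≤ t) (ht1 : t ≤ 1) :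
    Real.sqrt (min 1 (1 - u.re)) ≤ ‖1 - (t : ℂ) * u‖ := by
  have h1 : u.re * u.re + u.im * u.im = 1 := by
    have := Complex.sq_norm u
    rw [Complex.normSq_apply] at this
    rw [hu] at this
    linarith [this]
  have hre : |u.re| ≤ 1 := by
    rw [← hu]
    exact Complex.abs_re_le_norm u
  rw [abs_le] at hre
  have hsq : ‖1 - (t : ℂ) * u‖ ^ 2 = 1 - 2 * t * u.re + t ^ 2 := by
    rw [Complex.sq_norm, Complex.normSq_apply]
    simp only [Complex.sub_re, Complex.sub_im, Complex.one_re, Complex.one_im,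
      Complex.mul_re, Complex.mul_im, Complex.ofReal_re, Complex.ofReal_im]
    nlinarith [h1]
  have hmin : min 1 (1 - u.re) ≤ ‖1 - (t : ℂ) * u‖ ^ 2 := by
    rw [hsq]
    rcases le_or_gt u.re 0 with h | h
    · refine le_trans (min_le_left _ _) ?_
      nlinarith
    · refine le_trans (min_le_right _ _) ?_
      nlinarith [sq_nonneg (1 - t), sq_nonneg t]
  calc Real.sqrt (min 1 (1 - u.re)) ≤ Real.sqrt (‖1 - (t : ℂ) * u‖ ^ 2) :=
        Real.sqrt_le_sqrt hmin
    _ = ‖1 - (t : ℂ) * u‖ := Real.sqrt_sq (norm_nonneg _)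

lemma re_bound (p : ℕ) (hp : p.Prime) (β : ℝ) (hβ0 : 0 < β) (hβ1 : β < 1)
    (k : ℕ) (hk : 1 ≤ k) (ζ : ℂ) (hζ : ‖ζ‖ = 1)
    (hζk : ζ ^ p ^ k = 1) (hζj : ∀ j < k, ζ ^ p ^ j ≠ 1) :
    ∃ M : ℝ, ∀ r : ℝ, 0 ≤ r → r < 1 →
      (∑' n : ℕ, ((if n = 0 then (0:ℝ) else β ^ p ^ padicValNat p n : ℝ) : ℂ)
          * ((r:ℂ) * ζ) ^ n).re
        ≤ M + c p β k * (r ^ p ^ k / (1 - r ^ p ^ k)) := by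
  classical
  set D : ℕ → ℝ := fun j => Real.sqrt (min 1 (1 - (ζ ^ p ^ j).re)) with hD
  have hDpos : ∀ j < k, 0 < D j := by
    intro j hj
    have h1 : (ζ ^ p ^ j).re < 1 := re_lt_one _ (by rw [norm_pow, hζ, one_pow]) (hζj j hj)
    apply Real.sqrt_pos.mpr
    simp only [lt_min_iff]
    constructor <;> [norm_num; linarith]
  refine ⟨∑ j ∈ Finset.range k, |c p β j| / D j, ?_⟩
  intro r hr0 hr1
  set z : ℂ := (r : ℂ) * ζ with hz
  have hzr : ‖z‖ = r := by
    rw [hz, norm_mul, hζ, mul_one, Complex.norm_real, Real.norm_of_nonneg hr0]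
  have hzlt : ‖z‖ < 1 := by rwa [hzr]
  rw [key p hp β hβ0 hβ1 z hzlt]
  have hT : Summable (T p β z) := summable_T p hp β hβ0 hβ1 z hzlt
  have hTre : Summable (fun j => (T p β z j).re) := (Complex.hasSum_re hT.hasSum).summable
  rw [Complex.re_tsum hT]
  rw [← hTre.sum_add_tsum_nat_add k]
  -- the tail terms: real values
  have hpow : ∀ i : ℕ, z ^ p ^ (i + k) = ((r ^ p ^ (i + k) : ℝ) : ℂ) := by
    intro i
    have hζpow : ζ ^ p ^ (i + k) = 1 := by
      have : p ^ (i + k) = p ^ k * p ^ i := by rw [← pow_add]; ring_nf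
      rw [this, pow_mul, hζk, one_pow]
    rw [hz, mul_pow, hζpow, mul_one]
    push_cast
    ring
  have htail_eq : ∀ i : ℕ, (T p β z (i + k)).re
      = c p β (i + k) * (r ^ p ^ (i + k) / (1 - r ^ p ^ (i + k))) := by
    intro i
    have hne : r ^ p ^ (i + k) < 1 := pow_lt_one₀ hr0 hr1 (pow_ne_zero _ hp.pos.ne')
    simp only [T, hpow i]
    have : ((c p β (i+k) : ℝ) : ℂ) * (((r ^ p ^ (i + k) : ℝ) : ℂ)
        / (1 - ((r ^ p ^ (i + k) : ℝ) : ℂ)))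
        = (((c p β (i+k) * (r ^ p ^ (i + k) / (1 - r ^ p ^ (i + k)))) : ℝ) : ℂ) := by
      push_cast
      ring
    rw [this, Complex.ofReal_re]
  have htail_nonpos : ∀ i : ℕ, 1 ≤ i + k → (T p β z (i + k)).re ≤ 0 := by
    intro i hi
    rw [htail_eq i]
    have hx1 : r ^ p ^ (i + k) < 1 := pow_lt_one₀ hr0 hr1 (pow_ne_zero _ hp.pos.ne')
    have hx0 : 0 ≤ r ^ p ^ (i + k) := pow_nonneg hr0 _
    have hc := c_nonpos p β hβ0 hβ1 hp.two_le (i + k) hi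
    have : 0 ≤ r ^ p ^ (i + k) / (1 - r ^ p ^ (i + k)) := by
      apply div_nonneg hx0; linarith
    exact mul_nonpos_of_nonpos_of_nonneg hc this
  -- bound the tail
  have htailsum : Summable (fun i => (T p β z (i + k)).re) :=
    (summable_nat_add_iff k).mpr hTre
  have htail_le : (∑' i : ℕ, (T p β z (i + k)).re)
      ≤ c p β k * (r ^ p ^ k / (1 - r ^ p ^ k)) := by
    rw [htailsum.tsum_eq_zero_add]
    have h0 : (T p β z (0 + k)).re = c p β k * (r ^ p ^ k / (1 - r ^ p ^ k)) := by
      rw [htail_eq 0]; norm_num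
    rw [h0]
    have : (∑' i : ℕ, (T p β z (i + 1 + k)).re) ≤ 0 := by
      apply tsum_nonpos
      intro i
      exact htail_nonpos (i + 1) (by omega)
    linarith
  -- bound the head
  have hhead : ∑ j ∈ Finset.range k, (T p β z j).re
      ≤ ∑ j ∈ Finset.range k, |c p β j| / D j := by
    apply Finset.sum_le_sum
    intro j hj
    rw [Finset.mem_range] at hj
    have hDj := hDpos j hj
    have hnormden : D j ≤ ‖1 - z ^ p ^ j‖ := by
      have : z ^ p ^ j = ((r ^ p ^ j : ℝ) : ℂ) * ζ ^ p ^ j := by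
        rw [hz, mul_pow]; push_cast; ring
      rw [this]
      exact denom_lb _ (by rw [norm_pow, hζ, one_pow]) _ (pow_nonneg hr0 _)
        (pow_le_one₀ hr0 hr1.le)
    calc (T p β z j).re ≤ ‖T p β z j‖ := Complex.re_le_norm _
      _ = |c p β j| * (‖z ^ p ^ j‖ / ‖1 - z ^ p ^ j‖) := by
          rw [T, norm_mul, norm_div, Complex.norm_real, Real.norm_eq_abs]
      _ ≤ |c p β j| * (1 / D j) := by
          apply mul_le_mul_of_nonneg_left ?_ (abs_nonneg _)
          apply div_le_div₀ (by norm_num) ?_ hDj hnormden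
          rw [norm_pow, hzr]
          exact pow_le_one₀ hr0 hr1.le
      _ = |c p β j| / D j := by ring
  linarith

lemma exists_root (p : ℕ) (hp : p.Prime) (w : ℂ) (hw : ‖w‖ = 1) (ε : ℝ) (hε : 0 < ε) :
    ∃ (k : ℕ) (ζ : ℂ), 1 ≤ k ∧ ‖ζ‖ = 1 ∧ ζ ^ p ^ k = 1 ∧ (∀ j < k, ζ ^ p ^ j ≠ 1) ∧
      ‖ζ - w‖ < ε := by
  have hp1 : (1:ℝ) < p := by exact_mod_cast hp.one_lt
  obtain ⟨k, hk⟩ := pow_unbounded_of_one_lt (max (8 * π / ε) (4 * π)) hp1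
  set P : ℝ := (p:ℝ) ^ k with hPdef
  have hπ : (0:ℝ) < π := Real.pi_pos
  have hπ3 : (3:ℝ) < π := Real.pi_gt_three
  have hP4 : 4 * π < P := lt_of_le_of_lt (le_max_right _ _) hk
  have hP8 : 8 * π / ε < P := lt_of_le_of_lt (le_max_left _ _) hk
  have hP0 : 0 < P := by positivity
  have hk1 : 1 ≤ k := by
    rcases Nat.eq_zero_or_pos k with h | h
    · exfalso; rw [h, pow_zero] at hPdef; rw [hPdef] at hP4; linarith
    · exact h
  set θ : ℝ := w.arg with hθ
  have hwθ : w = Complex.exp (θ * Complex.I) := by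
    conv_lhs => rw [← Complex.norm_mul_exp_arg_mul_I w]
    rw [hw]
    simp [hθ]
  set a0 : ℤ := ⌊θ * P / (2 * π)⌋ with ha0
  set a : ℤ := if (p:ℤ) ∣ a0 then a0 + 1 else a0 with ha
  have hpa : ¬ (p:ℤ) ∣ a := by
    rw [ha]
    split_ifs with h
    · intro h2
      have hd : (p:ℤ) ∣ 1 := (Int.dvd_add_right h).mp h2
      have := Int.le_of_dvd one_pos hd
      have := hp.two_le
      omega
    · exact h
  have h2π : (0:ℝ) < 2 * π := by linarith
  have h1 : (a0:ℝ) ≤ θ * P / (2 * π) := Int.floor_le _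
  have h2 : θ * P / (2 * π) < a0 + 1 := Int.lt_floor_add_one _
  have ha1 : (a0:ℝ) * (2 * π) ≤ θ * P := (le_div_iff₀ h2π).mp h1
  have ha2 : θ * P < ((a0:ℝ) + 1) * (2 * π) := (div_lt_iff₀ h2π).mp h2
  have haL : (a0:ℝ) ≤ (a:ℝ) := by
    rw [ha]; split_ifs <;> push_cast <;> linarith
  have haU : (a:ℝ) ≤ (a0:ℝ) + 1 := by
    rw [ha]; split_ifs <;> push_cast <;> linarith
  set x : ℝ := 2 * π * a / P with hx
  have hPx : P * x = 2 * π * a := by rw [hx]; field_simp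
  have hxθ : |x - θ| ≤ 4 * π / P := by
    have hxs : x - θ = (2 * π * (a:ℝ) - θ * P) / P := by
      rw [hx]; field_simp
    rw [hxs, abs_div, abs_of_pos hP0]
    gcongr
    rw [abs_le]
    constructor <;> nlinarith
  refine ⟨k, Complex.exp (x * Complex.I), hk1, ?_, ?_, ?_, ?_⟩
  · exact Complex.norm_exp_ofReal_mul_I x
  · rw [← Complex.exp_nat_mul]
    have harg : ((p ^ k : ℕ) : ℂ) * ((x:ℝ) * Complex.I) = ((P * x : ℝ) : ℂ) * Complex.I := by
      rw [hPdef]; push_cast; ring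
    rw [harg, hPx]
    have : (((2 * π * (a:ℝ) : ℝ)) : ℂ) * Complex.I = (a:ℂ) * (2 * (π:ℝ) * Complex.I) := by
      push_cast; ring
    rw [this, Complex.exp_int_mul_two_pi_mul_I]
  · intro j hj hone
    rw [← Complex.exp_nat_mul, Complex.exp_eq_one_iff] at hone
    obtain ⟨m, hm⟩ := hone
    have hmI : (((p:ℝ)^j * x : ℝ) : ℂ) * Complex.I = (((m:ℝ) * (2 * π) : ℝ) : ℂ) * Complex.I := by
      push_cast
      push_cast at hm
      linear_combination hm
    have hre : (p:ℝ) ^ j * x = (m:ℝ) * (2 * π) := by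
      exact_mod_cast mul_right_cancel₀ Complex.I_ne_zero hmI
    have hint : (a:ℝ) * (p:ℝ) ^ j = (m:ℝ) * (p:ℝ) ^ k := by
      rw [hx] at hre
      rw [hPdef] at hre
      have hpkne : ((p:ℝ)) ^ k ≠ 0 := by positivity
      field_simp at hre
      have hgoal : ((a:ℝ) * (p:ℝ) ^ j) * (2 * π) = ((m:ℝ) * (p:ℝ) ^ k) * (2 * π) := by
        linear_combination (2 * π) * hre
      exact mul_right_cancel₀ h2π.ne' hgoal
    have hintz : a * (p:ℤ) ^ j = m * (p:ℤ) ^ k := by exact_mod_cast hint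
    have hpne : ((p:ℤ)) ≠ 0 := by exact_mod_cast hp.pos.ne'
    have hdvd : (p:ℤ) ∣ a := by
      have hkj : k = j + (k - j) := by omega
      rw [hkj, pow_add] at hintz
      have hpj : ((p:ℤ) ^ j) ≠ 0 := pow_ne_zero j hpne
      have hval : a = m * (p:ℤ) ^ (k - j) := by
        apply mul_right_cancel₀ hpj
        linarith [hintz]
      rw [hval]
      exact Dvd.dvd.mul_left (dvd_pow_self (p:ℤ) (by omega)) m
    exact hpa hdvd
  · rw [hwθ]
    have hsplit : Complex.exp ((x:ℝ) * Complex.I) - Complex.exp ((θ:ℝ) * Complex.I)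
        = Complex.exp ((θ:ℝ) * Complex.I) * (Complex.exp (((x - θ : ℝ):ℝ) * Complex.I) - 1) := by
      rw [mul_sub, mul_one, ← Complex.exp_add]
      congr 1
      push_cast
      ring
    rw [hsplit, norm_mul, Complex.norm_exp_ofReal_mul_I, one_mul]
    have habs : ‖((x - θ : ℝ) : ℂ) * Complex.I‖ = |x - θ| := by
      rw [norm_mul, Complex.norm_I, mul_one, Complex.norm_real, Real.norm_eq_abs]
    have hle1 : ‖((x - θ : ℝ):ℂ) * Complex.I‖ ≤ 1 := by
      rw [habs]
      calc |x - θ| ≤ 4 * π / P := hxθ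
        _ ≤ 1 := by rw [div_le_one hP0]; linarith
    have h2 := Complex.norm_exp_sub_one_le hle1
    rw [habs] at h2
    calc ‖(Complex.exp (((x - θ : ℝ):ℝ) * Complex.I) - 1)‖ ≤ 2 * |x - θ| := h2
      _ ≤ 2 * (4 * π / P) := by linarith [hxθ]
      _ = 8 * π / P := by ring
      _ < ε := by
          rw [div_lt_iff₀ hP0]
          have h3 : 8 * π / ε < P := hP8
          rw [div_lt_iff₀ hε] at h3
          linarith

end HbetaAux

open HbetaAux in
/-- The series H_β(z) = ∑_{n≥1} β^{|n|_p^{-1}} zⁿ has radius of convergence 1 and has the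
unit circle as a natural boundary. -/
theorem Hbeta_natural_boundary (p : ℕ) (hp : p.Prime) (β : ℝ) (hβ0 : 0 < β) (hβ1 : β < 1)
    (b : ℕ → ℝ)
    (hb : ∀ n : ℕ, b n = if n = 0 then 0 else β ^ (p ^ padicValNat p n)) :
    (∀ z : ℂ, ‖z‖ < 1 → Summable (fun n : ℕ => (b n : ℂ) * z ^ n)) ∧
    (∀ z : ℂ, 1 < ‖z‖ → ¬ Summable (fun n : ℕ => (b n : ℂ) * z ^ n)) ∧
    (∀ w : ℂ, ‖w‖ = 1 → ∀ ε : ℝ, 0 < ε →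
      ¬ ∃ g : ℂ → ℂ, DifferentiableOn ℂ g (Metric.ball w ε) ∧
        ∀ z ∈ Metric.ball w ε ∩ Metric.ball (0 : ℂ) 1,
          g z = ∑' n : ℕ, (b n : ℂ) * z ^ n) := by
  have hble : ∀ n : ℕ, |b n| ≤ 1 := by
    intro n
    rw [hb n]
    split_ifs with h
    · simp
    · rw [abs_of_pos (pow_pos hβ0 _)]
      exact pow_le_one₀ hβ0.le hβ1.le
  refine ⟨?_, ?_, ?_⟩
  · -- summable inside
    intro z hz
    apply Summable.of_norm_bounded (summable_geometric_of_lt_one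
      (norm_nonneg z) hz)
    intro n
    rw [norm_mul, Complex.norm_real, Real.norm_eq_abs, norm_pow]
    calc |b n| * ‖z‖ ^ n ≤ 1 * ‖z‖ ^ n := by
          apply mul_le_mul_of_nonneg_right (hble n) (by positivity)
      _ = ‖z‖ ^ n := one_mul _
  · -- not summable outside
    intro z hz hsum
    have h0 := hsum.tendsto_atTop_zero
    have hmono : Tendsto (fun m : ℕ => p * m + 1) atTop atTop := by
      apply tendsto_atTop_atTop_of_monotone
      · intro i j hij
        have := hp.pos
        exact Nat.add_le_add_right (Nat.mul_le_mul_left p hij) 1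
      · intro n
        exact ⟨n, by nlinarith [hp.pos]⟩
    have hsub := h0.comp hmono
    have hnorm := hsub.norm
    simp only [Function.comp, norm_zero] at hnorm
    have hval : ∀ m : ℕ, ‖(b (p * m + 1) : ℂ) * z ^ (p * m + 1)‖ = β * ‖z‖ ^ (p * m + 1) := by
      intro m
      have hdvd : ¬ p ∣ (p * m + 1) := by
        intro hd
        have : p ∣ 1 := (Nat.dvd_add_right (Dvd.intro m rfl)).mp hd
        have := Nat.le_of_dvd one_pos this
        have := hp.two_le
        omega
      have hv : padicValNat p (p * m + 1) = 0 := padicValNat.eq_zero_of_not_dvd hdvd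
      rw [hb, if_neg (by omega), hv, pow_zero, pow_one]
      rw [norm_mul, Complex.norm_real, Real.norm_eq_abs, norm_pow, abs_of_pos hβ0]
    rw [funext hval] at hnorm
    have hdiv : Tendsto (fun m : ℕ => β * ‖z‖ ^ (p * m + 1)) atTop atTop := by
      have h1 : Tendsto (fun m : ℕ => β * ‖z‖ ^ m) atTop atTop :=
        (tendsto_pow_atTop_atTop_of_one_lt hz).const_mul_atTop hβ0
      apply tendsto_atTop_mono ?_ h1
      intro m
      apply mul_le_mul_of_nonneg_left ?_ hβ0.le
      apply pow_le_pow_right₀ (le_of_lt hz)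
      nlinarith [hp.pos]
    exact (not_tendsto_atTop_of_tendsto_nhds hnorm) hdiv
  · -- natural boundary
    intro w hw ε hε
    rintro ⟨g, hgdiff, hagree⟩
    simp only [hb] at hagree
    obtain ⟨k, ζ, hk1, hζn, hζk, hζj, hζw⟩ := exists_root p hp w hw ε hε
    have hζball : ζ ∈ Metric.ball w ε := by
      rw [Metric.mem_ball, dist_eq_norm]
      exact hζw
    obtain ⟨M, hM⟩ := re_bound p hp β hβ0 hβ1 k hk1 ζ hζn hζk hζj
    set r : ℕ → ℝ := fun m => 1 - ((m:ℝ) + 2)⁻¹ with hrdef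
    have hr0 : ∀ m, 0 ≤ r m := by
      intro m
      have h1 : ((m:ℝ) + 2)⁻¹ ≤ 1 := by
        rw [inv_le_one_iff₀]
        right
        push_cast
        linarith [Nat.cast_nonneg (α := ℝ) m]
      simp only [hrdef, sub_nonneg]
      exact h1
    have hr1 : ∀ m, r m < 1 := by
      intro m
      have : (0:ℝ) < ((m:ℝ) + 2)⁻¹ := by positivity
      simp only [hrdef]
      linarith
    have hrlim : Tendsto r atTop (𝓝 1) := by
      have h1 : Tendsto (fun m : ℕ => ((m:ℝ) + 2)⁻¹) atTop (𝓝 0) := by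
        apply tendsto_inv_atTop_zero.comp
        apply tendsto_atTop_add_const_right
        exact tendsto_natCast_atTop_atTop
      have h2 : Tendsto (fun m : ℕ => 1 - ((m:ℝ) + 2)⁻¹) atTop (𝓝 (1 - 0)) :=
        tendsto_const_nhds.sub h1
      simpa using h2
    set zs : ℕ → ℂ := fun m => ((r m : ℝ) : ℂ) * ζ with hzs
    have hzlim : Tendsto zs atTop (𝓝 ζ) := by
      have h1 : Tendsto (fun m => ((r m : ℝ) : ℂ)) atTop (𝓝 ((1:ℝ):ℂ)) :=
        (Complex.continuous_ofReal.tendsto _).comp hrlim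
      have := h1.mul_const ζ
      simpa using this
    have hzball1 : ∀ m, zs m ∈ Metric.ball (0:ℂ) 1 := by
      intro m
      rw [Metric.mem_ball, dist_zero_right]
      show ‖((r m : ℝ) : ℂ) * ζ‖ < 1
      rw [norm_mul, Complex.norm_real, Real.norm_of_nonneg (hr0 m), hζn, mul_one]
      exact hr1 m
    have hzballw : ∀ᶠ m in atTop, zs m ∈ Metric.ball w ε :=
      hzlim.eventually (Metric.isOpen_ball.eventually_mem hζball)
    have hgeq : ∀ᶠ m in atTop, g (zs m)
        = ∑' n : ℕ, ((if n = 0 then (0:ℝ) else β ^ p ^ padicValNat p n : ℝ) : ℂ)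
            * (zs m) ^ n := by
      filter_upwards [hzballw] with m hm
      exact hagree (zs m) ⟨hm, hzball1 m⟩
    have hcont : ContinuousWithinAt g (Metric.ball w ε) ζ :=
      (hgdiff.continuousOn) ζ hζball
    have hglim : Tendsto (fun m => g (zs m)) atTop (𝓝 (g ζ)) := by
      apply hcont.tendsto.comp
      rw [tendsto_nhdsWithin_iff]
      exact ⟨hzlim, hzballw⟩
    have hHlim : Tendsto (fun m => ∑' n : ℕ,
        ((if n = 0 then (0:ℝ) else β ^ p ^ padicValNat p n : ℝ) : ℂ) * (zs m) ^ n) atTop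
        (𝓝 (g ζ)) := hglim.congr' hgeq
    have hRelim : Tendsto (fun m => (∑' n : ℕ,
        ((if n = 0 then (0:ℝ) else β ^ p ^ padicValNat p n : ℝ) : ℂ) * (zs m) ^ n).re) atTop
        (𝓝 ((g ζ).re)) := (Complex.continuous_re.tendsto _).comp hHlim
    have hslim : Tendsto (fun m => (r m) ^ p ^ k) atTop (𝓝 1) := by
      have := hrlim.pow (p ^ k)
      simpa using this
    have hspos : ∀ m, (r m) ^ p ^ k < 1 := fun m =>
      pow_lt_one₀ (hr0 m) (hr1 m) (pow_ne_zero _ hp.pos.ne')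
    have hinvlim : Tendsto (fun m => (1 - (r m) ^ p ^ k)⁻¹) atTop atTop := by
      apply tendsto_inv_nhdsGT_zero.comp
      rw [tendsto_nhdsWithin_iff]
      constructor
      · have h2 : Tendsto (fun m => 1 - (r m) ^ p ^ k) atTop (𝓝 (1 - 1)) :=
          tendsto_const_nhds.sub hslim
        simpa using h2
      · filter_upwards with m
        simp only [Set.mem_Ioi, sub_pos]
        exact hspos m
    have hmulim : Tendsto (fun m => (r m) ^ p ^ k * (1 - (r m) ^ p ^ k)⁻¹) atTop atTop :=
      hslim.pos_mul_atTop one_pos hinvlim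
    have hck : c p β k < 0 := c_neg p β hβ0 hβ1 hp.two_le k hk1
    have hbot : Tendsto (fun m => M + c p β k * ((r m) ^ p ^ k / (1 - (r m) ^ p ^ k)))
        atTop atBot := by
      apply tendsto_atBot_add_const_left
      have := hmulim.const_mul_atTop_of_neg hck
      apply this.congr
      intro m
      rw [div_eq_mul_inv]
    have hle : ∀ m, (∑' n : ℕ,
        ((if n = 0 then (0:ℝ) else β ^ p ^ padicValNat p n : ℝ) : ℂ) * (zs m) ^ n).re
        ≤ M + c p β k * ((r m) ^ p ^ k / (1 - (r m) ^ p ^ k)) := fun m =>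
      hM (r m) (hr0 m) (hr1 m)
    have hbot2 : Tendsto (fun m => (∑' n : ℕ,
        ((if n = 0 then (0:ℝ) else β ^ p ^ padicValNat p n : ℝ) : ℂ) * (zs m) ^ n).re)
        atTop atBot := tendsto_atBot_mono hle hbot
    exact (not_tendsto_atBot_of_tendsto_nhds hRelim) hbot2
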